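/- Let d, m, k ∈ ℕ with 1 ≤ k < m, let 0 < ε₁ ≤ 0.5, 0 < δ₁ ≤ 0.5 and 0 < ε_d < 0.1. Let S = {(x_1,y_1),…,(x_m,y_m)} ⊆ ℝ^d × {−1,1} satisfy Assumption(ψ, φ) with ψ ≤ 0.1 and φ ≤ ε_d/(4m). Suppose w ∈ ℝ^d is an (ε₁, δ₁)-approximate KKT point of the margin-maximization problem w.r.t. S with multipliers λ_1,…,λ_m. Let F ⊆ [m] be a forget set with |F| = k and set ŵ = w − Σ_{l∈F} λ_l y_l x_l. Then the rescaled vector (1/(1 − 0.6·k·ε_d/m))·ŵ is an (ε₁ + ε₁ε_d/(m/k − ε_d), δ₁ + δ₁ε_d/(m/k − ε_d) + 7.2·k·ε_d/m)-approximate KKT point of the margin-maximization problem w.r.t. the retained dataset {(x_i, y_i) : i ∈ [m] \ F}, with multipliers λ_i/(1 − 0.6·k·ε_d/m) for i ∈ [m] \ F. -/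

import Mathlib

lemma kkt_cs_arith (δ lm a b e : ℝ) (hδ0 : 0 < δ) (hδ : δ ≤ 0.5)
    (hl0 : 0 ≤ lm) (hl : lm ≤ 2.1) (hcs : lm * (a - 1) ≤ δ)
    (hb : |b| ≤ 0.525 * e) (he0 : 0 < e) (he : e ≤ 0.1) :
    (lm / (1 - 0.6*e)) * ((1/(1-0.6*e)) * (a - b) - 1) ≤ δ + 7.2 * e := by
  have hc : (0.94 : ℝ) ≤ 1 - 0.6*e := by linarith
  have hc0 : (0:ℝ) < 1 - 0.6*e := by linarith
  obtain ⟨hb1, hb2⟩ := abs_le.mp hb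
  have hexp : (lm / (1 - 0.6*e)) * ((1/(1-0.6*e)) * (a - b) - 1)
      = (lm * (a - b) - lm * (1 - 0.6*e)) / (1-0.6*e)^2 := by
    field_simp
  rw [hexp, div_le_iff₀ (by positivity)]
  nlinarith [mul_le_mul_of_nonneg_left hb1 hl0, mul_le_mul_of_nonneg_left hb2 hl0,
    mul_nonneg hl0 he0.le, sq_nonneg e, mul_pos he0 hδ0]

lemma kkt_stat_scale (ε₁ εd q e : ℝ) (hε : 0 < ε₁) (hq : 1 < q)
    (hεd : 0 < εd) (hεd' : εd < 0.1) (hqe : q * e = εd) (he : 0 ≤ e) :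
    ε₁ / (1 - 0.6*e) ≤ ε₁ + ε₁ * εd / (q - εd) := by
  have heεd : e ≤ εd := by nlinarith
  have hc0 : (0:ℝ) < 1 - 0.6*e := by linarith
  have hqd : (0:ℝ) < q - εd := by linarith
  have h1 : (1:ℝ) + εd/(q-εd) = q/(q-εd) := by field_simp; ring
  have key : 1/(1-0.6*e) ≤ 1 + εd/(q-εd) := by
    rw [h1, div_le_div_iff₀ hc0 hqd]
    nlinarith
  calc ε₁ / (1 - 0.6*e) = ε₁ * (1/(1-0.6*e)) := by ring
    _ ≤ ε₁ * (1 + εd/(q-εd)) := mul_le_mul_of_nonneg_left key hε.le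
    _ = ε₁ + ε₁ * εd / (q - εd) := by ring

lemma kkt_pf_scale (a b e : ℝ) (ha : 1 ≤ a) (hb : |b| ≤ 0.525*e)
    (he0 : 0 < e) (he : e ≤ 0.1) : 1 ≤ (1/(1-0.6*e)) * (a - b) := by
  have hb1 := (abs_le.mp hb).2
  have hc0 : (0:ℝ) < 1 - 0.6*e := by linarith
  rw [one_div_mul_eq_div, le_div_iff₀ hc0]
  linarith

set_option maxHeartbeats 1000000 in
/-- Batch unlearning of a forget set `F` of size `k` from a linear predictor:
the rescaled vector `(1/(1 - 0.6 k εd/m)) • (w - Σ_{l∈F} λ_l y_l x_l)` is an approximate KKT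
point of the margin-maximization problem w.r.t. the retained dataset `{(x_i,y_i) : i ∉ F}`
with multipliers `λ_i / (1 - 0.6 k εd/m)`. -/
theorem stmt_5
    (d m k : ℕ) (hk : 1 ≤ k) (hkm : k < m)
    (ε₁ δ₁ εd ψ φ : ℝ)
    (hε₁pos : 0 < ε₁) (hε₁le : ε₁ ≤ 0.5)
    (hδ₁pos : 0 < δ₁) (hδ₁le : δ₁ ≤ 0.5)
    (hεdpos : 0 < εd) (hεdlt : εd < 0.1)
    (hψ : ψ ≤ 0.1) (hφ : φ ≤ εd / (4 * m))
    (x : Fin m → EuclideanSpace ℝ (Fin d)) (y : Fin m → ℝ)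
    (hy : ∀ i, y i = 1 ∨ y i = -1)
    (hnorm : ∀ i, 1 - ψ ≤ ‖x i‖ ^ 2 ∧ ‖x i‖ ^ 2 ≤ 1 + ψ)
    (hortho : ∀ i j, i ≠ j → |(inner ℝ (x i) (x j) : ℝ)| ≤ φ)
    (w : EuclideanSpace ℝ (Fin d)) (lam : Fin m → ℝ)
    (hlam : ∀ i, 0 ≤ lam i)
    (hstat : ‖w - ∑ i, (lam i * y i) • x i‖ ≤ ε₁)
    (hcs : ∀ i, lam i * (y i * (inner ℝ w (x i) : ℝ) - 1) ≤ δ₁)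
    (hpf : ∀ i, 1 ≤ y i * (inner ℝ w (x i) : ℝ))
    (F : Finset (Fin m)) (hF : F.card = k) :
    (∀ i, i ∉ F → 0 ≤ lam i / (1 - 0.6 * k * εd / m)) ∧
    ‖(1 / (1 - 0.6 * k * εd / m)) • (w - ∑ l ∈ F, (lam l * y l) • x l) -
        ∑ i ∈ Fᶜ, ((lam i / (1 - 0.6 * k * εd / m)) * y i) • x i‖ ≤
      ε₁ + ε₁ * εd / ((m : ℝ) / k - εd) ∧
    (∀ i, i ∉ F →
      (lam i / (1 - 0.6 * k * εd / m)) *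
          (y i * (inner ℝ ((1 / (1 - 0.6 * k * εd / m)) •
              (w - ∑ l ∈ F, (lam l * y l) • x l)) (x i) : ℝ) - 1) ≤
        δ₁ + δ₁ * εd / ((m : ℝ) / k - εd) + 7.2 * k * εd / m) ∧
    (∀ i, i ∉ F →
      1 ≤ y i * (inner ℝ ((1 / (1 - 0.6 * k * εd / m)) •
          (w - ∑ l ∈ F, (lam l * y l) • x l)) (x i) : ℝ)) := by
  have hm0 : 0 < m := by omega
  have hmR : (0:ℝ) < m := by exact_mod_cast hm0
  have hkR : (0:ℝ) < k := by exact_mod_cast hk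
  have hkmR : (k:ℝ) < m := by exact_mod_cast hkm
  have hy1 : ∀ i, |y i| = 1 := fun i => by rcases hy i with h | h <;> simp [h]
  have hφ0 : 0 ≤ φ := by
    have h2 : (1:ℕ) < m := by omega
    exact (abs_nonneg _).trans (hortho ⟨0, hm0⟩ ⟨1, h2⟩ (by simp [Fin.ext_iff]))
  have hxnorm : ∀ i, ‖x i‖ ≤ 1.05 := by
    intro i
    nlinarith [(hnorm i).2, norm_nonneg (x i)]
  -- cross-term bound
  have hcross : ∀ (T : Finset (Fin m)) (j : Fin m), j ∉ T →
      |(inner ℝ (∑ l ∈ T, (lam l * y l) • x l) (x j) : ℝ)| ≤ φ * ∑ l ∈ T, lam l := by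
    intro T j hj
    rw [sum_inner, Finset.mul_sum]
    refine (Finset.abs_sum_le_sum_abs _ _).trans (Finset.sum_le_sum fun i hi => ?_)
    rw [real_inner_smul_left, abs_mul, abs_mul, hy1 i, mul_one, abs_of_nonneg (hlam i)]
    calc lam i * |(inner ℝ (x i) (x j) : ℝ)| ≤ lam i * φ :=
          mul_le_mul_of_nonneg_left (hortho i j (by rintro rfl; exact hj hi)) (hlam i)
      _ = φ * lam i := mul_comm _ _
  have hstat_in : ∀ j : Fin m,
      |(inner ℝ (w - ∑ i, (lam i * y i) • x i) (x j) : ℝ)| ≤ 1.05 * ε₁ := by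
    intro j
    calc |(inner ℝ (w - ∑ i, (lam i * y i) • x i) (x j) : ℝ)|
        ≤ ‖w - ∑ i, (lam i * y i) • x i‖ * ‖x j‖ := abs_real_inner_le_norm _ _
      _ ≤ ε₁ * 1.05 := mul_le_mul hstat (hxnorm j) (norm_nonneg _) hε₁pos.le
      _ = 1.05 * ε₁ := mul_comm _ _
  -- lower bound on the margin in terms of lam j
  have hlower : ∀ j : Fin m, 0.9 * lam j - φ * (∑ l ∈ Finset.univ.erase j, lam l)
      - 1.05 * ε₁ ≤ y j * (inner ℝ w (x j) : ℝ) := by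
    intro j
    have hdec : (inner ℝ w (x j) : ℝ) = (inner ℝ (w - ∑ i, (lam i * y i) • x i) (x j) : ℝ)
        + (inner ℝ (∑ i, (lam i * y i) • x i) (x j) : ℝ) := by
      rw [inner_sub_left]; ring
    have hsplit : (∑ i, (lam i * y i) • x i)
        = (lam j * y j) • x j + ∑ i ∈ Finset.univ.erase j, (lam i * y i) • x i :=
      (Finset.add_sum_erase _ _ (Finset.mem_univ j)).symm
    have hv : (inner ℝ (∑ i, (lam i * y i) • x i) (x j) : ℝ)
        = (lam j * y j) * ‖x j‖^2
          + (inner ℝ (∑ i ∈ Finset.univ.erase j, (lam i * y i) • x i) (x j) : ℝ) := by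
      rw [hsplit, inner_add_left, real_inner_smul_left, real_inner_self_eq_norm_sq]
    have h1 := hstat_in j
    have h2 := hcross (Finset.univ.erase j) j (Finset.notMem_erase j _)
    rw [abs_le] at h1 h2
    rcases hy j with hyv | hyv <;>
      · rw [hdec, hv, hyv]
        nlinarith [hlam j, (hnorm j).2, (hnorm j).1]
  -- individual multiplier bound
  have hΛ : ∀ i, lam i ≤ 2.1 := by
    have hne : (Finset.univ : Finset (Fin m)).Nonempty := ⟨⟨0, hm0⟩, Finset.mem_univ _⟩
    obtain ⟨j, -, hjmax⟩ := Finset.exists_mem_eq_sup' hne lam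
    have hub : ∀ i, lam i ≤ lam j := fun i => hjmax ▸ Finset.le_sup' lam (Finset.mem_univ i)
    have hsumle : ∑ l ∈ Finset.univ.erase j, lam l ≤ m * lam j := by
      calc ∑ l ∈ Finset.univ.erase j, lam l ≤ ∑ l : Fin m, lam l :=
            Finset.sum_le_sum_of_subset_of_nonneg (Finset.erase_subset _ _)
              (fun i _ _ => hlam i)
        _ ≤ (Finset.univ : Finset (Fin m)).card • lam j :=
            Finset.sum_le_card_nsmul _ _ _ (fun i _ => hub i)
        _ = m * lam j := by simp [nsmul_eq_mul]
    have hcsj := hcs j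
    have hlo := hlower j
    have hφm : φ * (∑ l ∈ Finset.univ.erase j, lam l) ≤ (εd/4) * lam j := by
      have h1 : φ * (∑ l ∈ Finset.univ.erase j, lam l) ≤ φ * (m * lam j) :=
        mul_le_mul_of_nonneg_left hsumle hφ0
      have h2 : φ * (m * lam j) ≤ (εd/(4*m)) * (m * lam j) :=
        mul_le_mul_of_nonneg_right hφ (mul_nonneg hmR.le ((hlam j).trans (hub j)))
      have h3 : (εd/(4*m)) * (m * lam j) = (εd/4) * lam j := by field_simp
      linarith
    have hεl : (εd/4) * lam j ≤ 0.025 * lam j := by nlinarith [hlam j]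
    have ha1 : 0.875 * lam j - 1.525 ≤ y j * (inner ℝ w (x j) : ℝ) - 1 := by linarith
    have hmul : lam j * (0.875 * lam j - 1.525) ≤ lam j * (y j * (inner ℝ w (x j) : ℝ) - 1) :=
      mul_le_mul_of_nonneg_left ha1 (hlam j)
    have hlamj : lam j ≤ 2.1 := by
      by_contra hcon
      push_neg at hcon
      nlinarith [sq_nonneg (lam j - 2.1)]
    exact fun i => (hub i).trans hlamj
  -- setup for retained dataset
  have hSF : ∑ l ∈ F, lam l ≤ 2.1 * k := by
    calc ∑ l ∈ F, lam l ≤ F.card • (2.1:ℝ) :=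
          Finset.sum_le_card_nsmul _ _ _ (fun i _ => hΛ i)
      _ = 2.1 * k := by rw [hF, nsmul_eq_mul]; ring
  have hcB : (1 : ℝ) - 0.6 * k * εd / m = 1 - 0.6 * ((k:ℝ) * εd / m) := by ring
  rw [hcB]
  set e : ℝ := (k:ℝ) * εd / m with he_def
  have he0 : 0 < e := by positivity
  have heub : e ≤ 0.1 := by
    rw [he_def, div_le_iff₀ hmR]
    nlinarith
  have hc0 : (0:ℝ) < 1 - 0.6 * e := by linarith
  have hq : 1 < (m:ℝ)/k := (one_lt_div hkR).mpr hkmR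
  have hqd : (0:ℝ) < (m:ℝ)/k - εd := by linarith
  have hb_bound : ∀ i, i ∉ F →
      |y i * (inner ℝ (∑ l ∈ F, (lam l * y l) • x l) (x i) : ℝ)| ≤ 0.525 * e := by
    intro i hi
    rw [abs_mul, hy1 i, one_mul]
    refine (hcross F i hi).trans ?_
    calc φ * ∑ l ∈ F, lam l ≤ (εd/(4*m)) * (2.1*k) :=
          mul_le_mul hφ hSF (Finset.sum_nonneg fun l _ => hlam l) (by positivity)
      _ = 0.525 * e := by rw [he_def]; field_simp; ring
  refine ⟨fun i _ => div_nonneg (hlam i) hc0.le, ?_, ?_, ?_⟩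
  · -- stationarity
    have hgoalv : (1/(1 - 0.6*e)) • (w - ∑ l ∈ F, (lam l * y l) • x l) -
        ∑ i ∈ Fᶜ, ((lam i / (1 - 0.6*e)) * y i) • x i
        = (1/(1 - 0.6*e)) • (w - ∑ i, (lam i * y i) • x i) := by
      rw [← Finset.sum_add_sum_compl F (fun i => (lam i * y i) • x i)]
      have hterm : ∀ i : Fin m, ((lam i / (1 - 0.6*e)) * y i) • x i
          = (1/(1 - 0.6*e)) • ((lam i * y i) • x i) := by
        intro i; rw [smul_smul]; congr 1; ring
      rw [Finset.sum_congr rfl (fun i _ => hterm i), ← Finset.smul_sum, ← smul_sub]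
      congr 1
      rw [sub_sub]
    rw [hgoalv, norm_smul, Real.norm_eq_abs, abs_of_pos (by positivity)]
    have hqe : ((m:ℝ)/k) * e = εd := by rw [he_def]; field_simp
    calc (1/(1 - 0.6*e)) * ‖w - ∑ i, (lam i * y i) • x i‖
        ≤ (1/(1 - 0.6*e)) * ε₁ := mul_le_mul_of_nonneg_left hstat (by positivity)
      _ = ε₁ / (1 - 0.6*e) := by ring
      _ ≤ ε₁ + ε₁ * εd / ((m:ℝ)/k - εd) :=
          kkt_stat_scale ε₁ εd ((m:ℝ)/k) e hε₁pos hq hεdpos hεdlt hqe he0.le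
  · -- complementary slackness
    intro i hi
    have hinner : (inner ℝ ((1/(1 - 0.6*e)) • (w - ∑ l ∈ F, (lam l * y l) • x l)) (x i) : ℝ)
        = (1/(1 - 0.6*e)) * ((inner ℝ w (x i) : ℝ)
            - (inner ℝ (∑ l ∈ F, (lam l * y l) • x l) (x i) : ℝ)) := by
      rw [real_inner_smul_left, inner_sub_left]
    rw [hinner]
    have hrw : y i * ((1/(1 - 0.6*e)) * ((inner ℝ w (x i) : ℝ)
          - (inner ℝ (∑ l ∈ F, (lam l * y l) • x l) (x i) : ℝ)))
        = (1/(1 - 0.6*e)) * ((y i * (inner ℝ w (x i) : ℝ))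
            - (y i * (inner ℝ (∑ l ∈ F, (lam l * y l) • x l) (x i) : ℝ))) := by ring
    rw [hrw]
    have key := kkt_cs_arith δ₁ (lam i) (y i * (inner ℝ w (x i) : ℝ))
      (y i * (inner ℝ (∑ l ∈ F, (lam l * y l) • x l) (x i) : ℝ)) e hδ₁pos hδ₁le
      (hlam i) (hΛ i) (hcs i) (hb_bound i hi) he0 heub
    have hmid : 0 ≤ δ₁ * εd / ((m:ℝ)/k - εd) :=
      div_nonneg (mul_nonneg hδ₁pos.le hεdpos.le) hqd.le
    have h72 : 7.2 * (k:ℝ) * εd / m = 7.2 * e := by rw [he_def]; ring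
    linarith
  · -- positive feasibility
    intro i hi
    have hinner : (inner ℝ ((1/(1 - 0.6*e)) • (w - ∑ l ∈ F, (lam l * y l) • x l)) (x i) : ℝ)
        = (1/(1 - 0.6*e)) * ((inner ℝ w (x i) : ℝ)
            - (inner ℝ (∑ l ∈ F, (lam l * y l) • x l) (x i) : ℝ)) := by
      rw [real_inner_smul_left, inner_sub_left]
    rw [hinner]
    have hrw : y i * ((1/(1 - 0.6*e)) * ((inner ℝ w (x i) : ℝ)
          - (inner ℝ (∑ l ∈ F, (lam l * y l) • x l) (x i) : ℝ)))
        = (1/(1 - 0.6*e)) * ((y i * (inner ℝ w (x i) : ℝ))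
            - (y i * (inner ℝ (∑ l ∈ F, (lam l * y l) • x l) (x i) : ℝ))) := by ring
    rw [hrw]
    exact kkt_pf_scale _ _ e (hpf i) (hb_bound i hi) he0 heub
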